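/- Let v' be the longest element of the parabolic subgroup ⟨s_1, …, s_{i−1}⟩ ≅ S_i and v the longest element of ⟨s_0, s_1, …, s_{i−1}⟩ ≅ S_{i+1} inside the affine symmetric group of type A_{n−1}^{(1)}, with 1 ≤ i < e ≤ n. Then in the 0-Hecke monoid, C_{i,e} · D_{v'} = D_v · C_{i,e}, where C_{i,e} = T_{i−1} ⋯ T_1 T_0 T_{n−1} ⋯ T_e and D_w denotes the 0-Hecke element of w. -/

import Mathlib

/-- The cyclically decreasing word of `C_{i,e}`. -/
def CWord (n : ℕ) (i e : ℕ) : List (ZMod n) :=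
  (List.range (if e < i then i - e else i + n - e)).map
    (fun t => (((i : ℤ) - 1 - (t : ℤ) : ℤ) : ZMod n))

/-- The 0-Hecke (Demazure) product `C_{i,e} = T_{i−1} T_{i−2} ⋯ T_e`. -/
def CProd {M : Type*} [Monoid M] (n : ℕ) (T : ZMod n → M) (i e : ℕ) : M :=
  ((CWord n i e).map T).prod

/-- The 0-Hecke element `D_w` of the longest element `w` of the parabolic subgroup
generated by `s_off, s_{off+1}, …, s_{off+m−1}` (isomorphic to `S_{m+1}`),
computed on the standard reduced word
`(s_off)(s_{off+1} s_off) ⋯ (s_{off+m−1} ⋯ s_off)`. -/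
def DLongest {M : Type*} [Monoid M] (n : ℕ) (T : ZMod n → M) (off m : ℕ) : M :=
  ((List.range m).map (fun a =>
    (((List.range (a + 1)).map (fun t => T ((off + a - t : ℕ) : ZMod n))).prod))).prod

section Aux
variable {M : Type*} [Monoid M] {n : ℕ}

/-- decreasing word `a, a-1, …, a-L+1` in `ZMod n`. -/
def Wd (a : ZMod n) (L : ℕ) : List (ZMod n) :=
  (List.range L).map (fun t : ℕ => a - (t : ZMod n))

def PW (T : ZMod n → M) (a : ZMod n) (L : ℕ) : M := ((Wd a L).map T).prod

lemma PW_zero (T : ZMod n → M) (a : ZMod n) : PW T a 0 = 1 := rfl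

lemma PW_succ (T : ZMod n → M) (a : ZMod n) (L : ℕ) :
    PW T a (L + 1) = PW T a L * T (a - (L : ZMod n)) := by
  simp [PW, Wd, List.range_succ]

lemma Wd_cons (a : ZMod n) (L : ℕ) : Wd a (L + 1) = a :: Wd (a - 1) L := by
  unfold Wd
  rw [List.range_succ_eq_map, List.map_cons, List.map_map]
  congr 1
  · simp
  · apply List.map_congr_left
    intro t _
    simp only [Function.comp]
    push_cast
    ring

lemma PW_cons (T : ZMod n → M) (a : ZMod n) (L : ℕ) :
    PW T a (L + 1) = T a * PW T (a - 1) L := by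
  rw [PW, Wd_cons, List.map_cons, List.prod_cons, ← PW]

lemma Wd_append (a : ZMod n) (k m : ℕ) :
    Wd a (k + m) = Wd a k ++ Wd (a - (k : ZMod n)) m := by
  unfold Wd
  rw [List.range_add, List.map_append]
  congr 1
  rw [List.map_map]
  apply List.map_congr_left
  intro t _
  simp only [Function.comp]
  push_cast
  ring

lemma PW_append (T : ZMod n → M) (a : ZMod n) (k m : ℕ) :
    PW T a (k + m) = PW T a k * PW T (a - (k : ZMod n)) m := by
  unfold PW
  rw [Wd_append, List.map_append, List.prod_append]

lemma mem_Wd {a y : ZMod n} {L : ℕ} (h : y ∈ Wd a L) : ∃ r < L, y = a - (r : ZMod n) := by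
  simp only [Wd, List.mem_map, List.mem_range] at h
  obtain ⟨r, hr, rfl⟩ := h
  exact ⟨r, hr, rfl⟩

lemma flatMap_sing {α β : Type*} (f : α → β) (l : List α) :
    (l.flatMap fun a => [f a]) = l.map f := by
  induction l with
  | nil => rfl
  | cons b l ih => simp [List.flatMap_cons, ih]

lemma prod_comm_right (T : ZMod n → M) (l : List (ZMod n)) (x : ZMod n)
    (h : ∀ y ∈ l, T x * T y = T y * T x) :
    (l.map T).prod * T x = T x * (l.map T).prod := by
  induction l with
  | nil => simp
  | cons b l ih =>
    simp only [List.map_cons, List.prod_cons]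
    rw [mul_assoc, ih (fun y hy => h y (List.mem_cons_of_mem _ hy)), ← mul_assoc,
      ← h b List.mem_cons_self, mul_assoc]

lemma castNe1 (hn : 3 ≤ n) {d : ℕ} (h2 : 2 ≤ d) (hd : d ≤ n - 2) : (d : ZMod n) ≠ 1 := by
  haveI : NeZero n := ⟨by omega⟩
  haveI : Fact (1 < n) := ⟨by omega⟩
  intro h
  have h1 : ((d : ZMod n)).val = d := ZMod.val_cast_of_lt (by omega)
  rw [h, ZMod.val_one] at h1
  omega

lemma commT (hn : 3 ≤ n) (T : ZMod n → M)
    (hcomm : ∀ a b : ZMod n, a - b ≠ 1 → b - a ≠ 1 → T a * T b = T b * T a)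
    (x : ZMod n) (d : ℕ) (h2 : 2 ≤ d) (hd : d ≤ n - 2) :
    T x * T (x - (d : ZMod n)) = T (x - (d : ZMod n)) * T x := by
  apply hcomm
  · have h : x - (x - (d : ZMod n)) = ((d : ℕ) : ZMod n) := by ring
    rw [h]
    exact castNe1 hn h2 hd
  · have h : ((n - d : ℕ) : ZMod n) = (x - (d : ZMod n)) - x := by
      rw [Nat.cast_sub (by omega : d ≤ n), ZMod.natCast_self]
      ring
    rw [← h]
    exact castNe1 hn (by omega) (by omega)

lemma PW_two (T : ZMod n → M) (x : ZMod n) : PW T x 2 = T x * T (x - 1) := by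
  rw [show (2 : ℕ) = 1 + 1 from rfl, PW_succ, Nat.cast_one]
  congr 1
  rw [show (1 : ℕ) = 0 + 1 from rfl, PW_succ, PW_zero, one_mul, Nat.cast_zero, sub_zero]

/-- The key push lemma: `(T_a ⋯ T_{a-L+1}) T_{a-t} = T_{a-t-1} (T_a ⋯ T_{a-L+1})`. -/
lemma push (hn : 3 ≤ n) (T : ZMod n → M)
    (hcomm : ∀ a b : ZMod n, a - b ≠ 1 → b - a ≠ 1 → T a * T b = T b * T a)
    (hbraid : ∀ a : ZMod n, T a * T (a + 1) * T a = T (a + 1) * T a * T (a + 1))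
    (a : ZMod n) (L t : ℕ) (hLn : L ≤ n - 1) (ht : t ≤ L - 2) (hL2 : 2 ≤ L) :
    PW T a L * T (a - (t : ZMod n)) = T (a - (t : ZMod n) - 1) * PW T a L := by
  obtain ⟨s, rfl⟩ : ∃ s, L = t + (2 + s) := ⟨L - t - 2, by omega⟩
  have hsplit : PW T a (t + (2 + s)) = PW T a t *
      (T (a - (t : ZMod n)) * T (a - (t : ZMod n) - 1) * PW T (a - (t : ZMod n) - 2) s) := by
    rw [PW_append, PW_append, PW_two, Nat.cast_ofNat]
  set j : ZMod n := a - (t : ZMod n) with hj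
  have hS : PW T (j - 2) s * T j = T j * PW T (j - 2) s := by
    apply prod_comm_right
    intro y hy
    obtain ⟨r, hr, rfl⟩ := mem_Wd hy
    have h : j - 2 - (r : ZMod n) = j - ((2 + r : ℕ) : ZMod n) := by push_cast; ring
    rw [h]
    exact commT hn T hcomm j (2 + r) (by omega) (by omega)
  have hP : PW T a t * T (j - 1) = T (j - 1) * PW T a t := by
    apply prod_comm_right
    intro y hy
    obtain ⟨r, hr, rfl⟩ := mem_Wd hy
    have h : j - 1 = (a - (r : ZMod n)) - (((t + 1 - r : ℕ)) : ZMod n) := by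
      rw [Nat.cast_sub (by omega : r ≤ t + 1)]
      push_cast
      rw [hj]
      ring
    rw [h]
    exact (commT hn T hcomm (a - (r : ZMod n)) (t + 1 - r) (by omega) (by omega)).symm
  have hb : T j * (T (j - 1) * (T j * PW T (j - 2) s))
      = T (j - 1) * (T j * (T (j - 1) * PW T (j - 2) s)) := by
    have h1 := hbraid (j - 1)
    rw [sub_add_cancel] at h1
    simp only [← mul_assoc]
    rw [← h1]
  rw [hsplit]
  simp only [mul_assoc]
  rw [hS, hb]
  simp only [← mul_assoc]
  rw [hP]

def DL (T : ZMod n → M) (off m : ℕ) : M :=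
  ((List.range m).map (fun a => PW T (((off + a : ℕ) : ZMod n)) (a + 1))).prod

lemma DL_zero (T : ZMod n → M) (off : ℕ) : DL T off 0 = 1 := rfl

lemma DL_succ (T : ZMod n → M) (off m : ℕ) :
    DL T off (m + 1) = DL T off m * PW T (((off + m : ℕ) : ZMod n)) (m + 1) := by
  unfold DL
  rw [List.range_succ, List.map_append, List.prod_append, List.map_singleton,
    List.prod_singleton]

/-- absorption: the longest element absorbs its generators on the right. -/
lemma absorb (hn : 3 ≤ n) (T : ZMod n → M)
    (hidem : ∀ a : ZMod n, T a * T a = T a)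
    (hcomm : ∀ a b : ZMod n, a - b ≠ 1 → b - a ≠ 1 → T a * T b = T b * T a)
    (hbraid : ∀ a : ZMod n, T a * T (a + 1) * T a = T (a + 1) * T a * T (a + 1))
    (off : ℕ) :
    ∀ m, m ≤ n - 1 → ∀ j < m, DL T off m * T (((off + j : ℕ) : ZMod n)) = DL T off m := by
  intro m
  induction m with
  | zero => intro _ j hj; omega
  | succ m ih =>
    intro hm j hj
    rw [DL_succ]
    rcases Nat.eq_zero_or_pos j with h0 | h1
    · subst h0
      have h : PW T (((off + m : ℕ) : ZMod n)) (m + 1) * T (((off + 0 : ℕ) : ZMod n))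
          = PW T (((off + m : ℕ) : ZMod n)) (m + 1) := by
        rw [PW_succ]
        have hx : ((off + m : ℕ) : ZMod n) - (m : ZMod n) = ((off + 0 : ℕ) : ZMod n) := by
          push_cast; ring
        rw [hx, mul_assoc, hidem]
      rw [mul_assoc, h]
    · have hpush : PW T (((off + m : ℕ) : ZMod n)) (m + 1) * T (((off + j : ℕ) : ZMod n))
          = T (((off + (j - 1) : ℕ) : ZMod n)) * PW T (((off + m : ℕ) : ZMod n)) (m + 1) := by
        have hp := push hn T hcomm hbraid (((off + m : ℕ) : ZMod n)) (m + 1) (m - j)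
          (by omega) (by omega) (by omega)
        have e1 : ((off + m : ℕ) : ZMod n) - ((m - j : ℕ) : ZMod n) = ((off + j : ℕ) : ZMod n) := by
          rw [Nat.cast_sub (by omega : j ≤ m)]
          push_cast; ring
        have e2 : ((off + j : ℕ) : ZMod n) - 1 = ((off + (j - 1) : ℕ) : ZMod n) := by
          rw [show off + j = (off + (j - 1)) + 1 by omega]
          push_cast; ring
        rw [e1, e2] at hp
        exact hp
      rw [mul_assoc, hpush, ← mul_assoc, ih (by omega) (j - 1) (by omega)]

lemma DLongest_eq (T : ZMod n → M) (off m : ℕ) : DLongest n T off m = DL T off m := by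
  unfold DLongest DL PW Wd
  congr 1
  apply List.map_congr_left
  intro a _
  rw [List.map_map]
  congr 1
  apply List.map_congr_left
  intro t ht
  rw [List.mem_range] at ht
  simp only [Function.comp]
  congr 1
  rw [Nat.cast_sub (by omega : t ≤ off + a)]

end Aux

/-- Let `v'` be the longest element of `⟨s_1,…,s_{i−1}⟩ ≅ S_i` and
`v` the longest element of `⟨s_0,…,s_{i−1}⟩ ≅ S_{i+1}`, with `1 ≤ i < e ≤ n`.
Then in the 0-Hecke monoid, `C_{i,e} · D_{v'} = D_v · C_{i,e}`. -/
theorem hecke_longest_element_intertwine {M : Type*} [Monoid M] (n : ℕ) (hn : 3 ≤ n)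
    (T : ZMod n → M)
    (hidem : ∀ a : ZMod n, T a * T a = T a)
    (hcomm : ∀ a b : ZMod n, a - b ≠ 1 → b - a ≠ 1 → T a * T b = T b * T a)
    (hbraid : ∀ a : ZMod n, T a * T (a + 1) * T a = T (a + 1) * T a * T (a + 1))
    (i e : ℕ) (hi : 1 ≤ i) (hie : i < e) (hen : e ≤ n) :
    CProd n T i e * DLongest n T 1 (i - 1)
      = DLongest n T 0 i * CProd n T i e := by
  obtain ⟨i', rfl⟩ : ∃ i', i = i' + 1 := ⟨i - 1, by omega⟩
  simp only [Nat.add_sub_cancel]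
  have hCW : CWord n (i' + 1) e = Wd ((i' : ℕ) : ZMod n) (i' + 1 + n - e) := by
    unfold CWord Wd
    rw [if_neg (by omega)]
    rw [show (do let a ← List.range (i' + 1 + n - e); pure ((a : ℕ) : ℤ))
        = (List.range (i' + 1 + n - e)).map (fun a : ℕ => (a : ℤ))
      from flatMap_sing _ _, List.map_map]
    apply List.map_congr_left
    intro t _
    simp only [Function.comp]
    push_cast
    ring
  have hC : CProd n T (i' + 1) e = PW T ((i' : ℕ) : ZMod n) (i' + 1 + n - e) := by
    unfold CProd PW
    rw [hCW]
  have cpushL : ∀ w : ℕ, w + 1 ≤ i' →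
      PW T ((i' : ℕ) : ZMod n) (i' + 1 + n - e) * T (((w + 1 : ℕ) : ZMod n))
      = T ((w : ℕ) : ZMod n) * PW T ((i' : ℕ) : ZMod n) (i' + 1 + n - e) := by
    intro w hw
    obtain ⟨d, hd⟩ : ∃ d, i' = d + (w + 1) := ⟨i' - (w + 1), by omega⟩
    have hp := push hn T hcomm hbraid ((i' : ℕ) : ZMod n) (i' + 1 + n - e) d
      (by omega) (by omega) (by omega)
    have e1 : ((i' : ℕ) : ZMod n) - ((d : ℕ) : ZMod n) = ((w + 1 : ℕ) : ZMod n) := by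
      rw [hd]; push_cast; ring
    have e2 : ((w + 1 : ℕ) : ZMod n) - 1 = ((w : ℕ) : ZMod n) := by
      push_cast; ring
    rw [e1, e2] at hp
    exact hp
  have cpushW : ∀ L w : ℕ, L ≤ w + 1 → w + 1 ≤ i' →
      PW T ((i' : ℕ) : ZMod n) (i' + 1 + n - e) * PW T (((w + 1 : ℕ) : ZMod n)) L
      = PW T ((w : ℕ) : ZMod n) L * PW T ((i' : ℕ) : ZMod n) (i' + 1 + n - e) := by
    intro L
    induction L with
    | zero => intro w _ _; simp only [PW_zero, mul_one, one_mul]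
    | succ L ihL =>
      intro w hLw hw
      rw [PW_cons, PW_cons]
      have hc1 : ((w + 1 : ℕ) : ZMod n) - 1 = ((w : ℕ) : ZMod n) := by push_cast; ring
      rw [hc1, ← mul_assoc, cpushL w hw, mul_assoc, mul_assoc]
      congr 1
      rcases Nat.eq_zero_or_pos L with h0 | h1
      · subst h0; simp only [PW_zero, mul_one, one_mul]
      · obtain ⟨u, rfl⟩ : ∃ u, w = u + 1 := ⟨w - 1, by omega⟩
        have hc2 : ((u + 1 : ℕ) : ZMod n) - 1 = ((u : ℕ) : ZMod n) := by push_cast; ring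
        rw [hc2]
        exact ihL u (by omega) (by omega)
  have step1 : ∀ m, m ≤ i' →
      PW T ((i' : ℕ) : ZMod n) (i' + 1 + n - e) * DL T 1 m
      = DL T 0 m * PW T ((i' : ℕ) : ZMod n) (i' + 1 + n - e) := by
    intro m
    induction m with
    | zero => intro _; simp only [DL_zero, mul_one, one_mul]
    | succ m ih =>
      intro hm
      rw [DL_succ, DL_succ, ← mul_assoc, ih (by omega), mul_assoc, mul_assoc]
      congr 1
      rw [show (1 + m) = m + 1 by omega, show (0 + m) = m by omega]
      exact cpushW (m + 1) m (by omega) (by omega)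
  have absW : ∀ k, k ≤ i' + 1 →
      DL T 0 (i' + 1) * PW T ((i' : ℕ) : ZMod n) k = DL T 0 (i' + 1) := by
    intro k
    induction k with
    | zero => intro _; rw [PW_zero, mul_one]
    | succ k ih =>
      intro hk
      rw [PW_succ, ← mul_assoc, ih (by omega)]
      have e : ((i' : ℕ) : ZMod n) - (k : ZMod n) = ((0 + (i' - k) : ℕ) : ZMod n) := by
        rw [show 0 + (i' - k) = i' - k by omega, Nat.cast_sub (by omega : k ≤ i')]
      rw [e]
      exact absorb hn T hidem hcomm hbraid 0 (i' + 1) (by omega) (i' - k) (by omega)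
  have step2 : DL T 0 (i' + 1) * PW T ((i' : ℕ) : ZMod n) (i' + 1 + n - e)
      = DL T 0 i' * PW T ((i' : ℕ) : ZMod n) (i' + 1 + n - e) := by
    have hsplit : PW T ((i' : ℕ) : ZMod n) (i' + 1 + n - e)
        = PW T ((i' : ℕ) : ZMod n) (i' + 1)
          * PW T (((i' : ℕ) : ZMod n) - ((i' + 1 : ℕ) : ZMod n)) (n - e) := by
      rw [show i' + 1 + n - e = (i' + 1) + (n - e) by omega, PW_append]
    have key : DL T 0 i' * PW T ((i' : ℕ) : ZMod n) (i' + 1)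
        * PW T ((i' : ℕ) : ZMod n) (i' + 1)
        = DL T 0 i' * PW T ((i' : ℕ) : ZMod n) (i' + 1) := by
      have h := absW (i' + 1) (le_refl _)
      rw [DL_succ, show 0 + i' = i' by omega] at h
      exact h
    rw [hsplit, DL_succ, show 0 + i' = i' by omega]
    simp only [← mul_assoc]
    rw [key]
  rw [hC, DLongest_eq, DLongest_eq, step1 i' (le_refl _), step2]
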